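/- Let X be a Banach space over 𝕂 ∈ {ℝ,ℂ}, let G ⊆ L(X) be a compact group of isometries (compact in the operator-norm topology), let Γ be an infinite set, let 1 ≤ q < ∞, and fix x₀ ∈ X with ‖x₀‖ = 1 that is G-invariant (g(x₀) = x₀ for all g ∈ G). Then the set NA_G^{x₀}(X, ℓ_q(Γ)) = {T ∈ L_G(X, ℓ_q(Γ)) : ‖T(x₀)‖ = ‖T‖} is |Γ|-lineable in L_G(X, ℓ_q(Γ)), i.e. its union with {0} contains a vector subspace of dimension |Γ|. -/

import Mathlib

open scoped Cardinal ENNReal NNReal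

noncomputable section

universe u

open MeasureTheory in
theorem exists_invariant_functional
    {𝕜 : Type u} [RCLike 𝕜]
    {X : Type u} [NormedAddCommGroup X] [NormedSpace 𝕜 X]
    (G : Set (X →L[𝕜] X))
    (hG_iso : ∀ g ∈ G, ∀ x : X, ‖g x‖ = ‖x‖)
    (hG_id : ContinuousLinearMap.id 𝕜 X ∈ G)
    (hG_comp : ∀ g ∈ G, ∀ h ∈ G, g.comp h ∈ G)
    (hG_inv : ∀ g ∈ G, ∃ h ∈ G, g.comp h = ContinuousLinearMap.id 𝕜 X ∧
      h.comp g = ContinuousLinearMap.id 𝕜 X)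
    (hG_cpt : IsCompact G)
    (x₀ : X) (hx₀ : ‖x₀‖ = 1) (hx₀G : ∀ g ∈ G, g x₀ = x₀) :
    ∃ f : X →L[𝕜] 𝕜, ‖f‖ ≤ 1 ∧ f x₀ = 1 ∧ ∀ g ∈ G, ∀ x : X, f (g x) = f x := by
  have hx₀ne : x₀ ≠ 0 := by
    intro h; rw [h, norm_zero] at hx₀; exact one_ne_zero hx₀.symm
  obtain ⟨f₀, hf₀norm, hf₀x₀⟩ := exists_dual_vector 𝕜 x₀ (norm_ne_zero_iff.mpr hx₀ne)
  -- group structure on the subtype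
  letI : Group ↥G :=
    { mul := fun g h => ⟨g.1.comp h.1, hG_comp _ g.2 _ h.2⟩
      one := ⟨ContinuousLinearMap.id 𝕜 X, hG_id⟩
      inv := fun g => ⟨(hG_inv g.1 g.2).choose, (hG_inv g.1 g.2).choose_spec.1⟩
      mul_assoc := fun a b c => Subtype.ext (by ext x; rfl)
      one_mul := fun a => Subtype.ext (by ext x; rfl)
      mul_one := fun a => Subtype.ext (by ext x; rfl)
      inv_mul_cancel := fun a => Subtype.ext (hG_inv a.1 a.2).choose_spec.2.2 }
  haveI : CompactSpace ↥G := isCompact_iff_compactSpace.mp hG_cpt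
  haveI : Nonempty ↥G := ⟨1⟩
  haveI : ContinuousMul ↥G := by
    constructor
    apply Continuous.subtype_mk
    exact (continuous_subtype_val.comp continuous_fst).mul
      (continuous_subtype_val.comp continuous_snd)
  haveI : ContinuousInv ↥G := by
    constructor
    apply SeqContinuous.continuous
    intro u a hu
    apply Filter.tendsto_of_subseq_tendsto
    intro ns hns
    obtain ⟨b, ψ, hψ, hb⟩ := CompactSpace.tendsto_subseq (fun n => (u (ns n))⁻¹)
    refine ⟨ψ, ?_⟩
    have h1 : Filter.Tendsto (fun n => u (ns (ψ n))) Filter.atTop (nhds a) :=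
      hu.comp (hns.comp hψ.tendsto_atTop)
    have h2 : Filter.Tendsto (fun n => u (ns (ψ n)) * (u (ns (ψ n)))⁻¹)
        Filter.atTop (nhds (a * b)) := h1.mul hb
    have h3 : (1 : ↥G) = a * b := by simpa using h2
    have h4 : a⁻¹ = b := inv_eq_of_mul_eq_one_right h3.symm
    rw [← h4] at hb
    exact hb
  haveI : IsTopologicalGroup ↥G := { }
  letI : MeasurableSpace ↥G := borel ↥G
  haveI : BorelSpace ↥G := ⟨rfl⟩
  set μ : Measure ↥G := Measure.haarMeasure (⊤ : TopologicalSpace.PositiveCompacts ↥G) with hμ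
  haveI : IsProbabilityMeasure μ := ⟨by
    rw [← TopologicalSpace.PositiveCompacts.coe_top (α := ↥G)]
    exact Measure.haarMeasure_self⟩
  -- continuity and integrability of the integrands
  have hcont : ∀ x : X, Continuous fun g : ↥G => f₀ ((g⁻¹ : ↥G).1 x) := by
    intro x
    have h2 : Continuous fun A : X →L[𝕜] X => A x :=
      (ContinuousLinearMap.apply 𝕜 X x).continuous
    exact f₀.continuous.comp (h2.comp (continuous_subtype_val.comp continuous_inv))
  have hcs : ∀ h : ↥G → 𝕜, HasCompactSupport h := fun h =>
    IsCompact.of_isClosed_subset isCompact_univ (isClosed_tsupport h) (Set.subset_univ _)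
  have hint : ∀ x : X, Integrable (fun g : ↥G => f₀ ((g⁻¹ : ↥G).1 x)) μ := fun x =>
    (hcont x).integrable_of_hasCompactSupport (hcs _)
  -- the averaged functional
  let flin : X →ₗ[𝕜] 𝕜 :=
    { toFun := fun x => ∫ g : ↥G, f₀ ((g⁻¹ : ↥G).1 x) ∂μ
      map_add' := by
        intro x y
        simp only [map_add]
        exact integral_add (hint x) (hint y)
      map_smul' := by
        intro c x
        simp only [_root_.map_smul, RingHom.id_apply, smul_eq_mul]
        exact integral_const_mul c _ }
  have hbound : ∀ x : X, ‖flin x‖ ≤ 1 * ‖x‖ := by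
    intro x
    have h1 : ∀ g : ↥G, ‖f₀ ((g⁻¹ : ↥G).1 x)‖ ≤ ‖x‖ := by
      intro g
      calc ‖f₀ ((g⁻¹ : ↥G).1 x)‖ ≤ ‖f₀‖ * ‖(g⁻¹ : ↥G).1 x‖ := f₀.le_opNorm _
        _ = ‖x‖ := by rw [hf₀norm, hG_iso _ (g⁻¹ : ↥G).2 x, one_mul]
    calc ‖flin x‖ ≤ ‖x‖ * (μ Set.univ).toReal :=
          norm_integral_le_of_norm_le_const (Filter.Eventually.of_forall h1)
      _ = 1 * ‖x‖ := by rw [measure_univ]; simp [mul_comm]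
  refine ⟨flin.mkContinuous 1 hbound, ?_, ?_, ?_⟩
  · exact LinearMap.mkContinuous_norm_le flin zero_le_one hbound
  · show flin x₀ = 1
    have : (fun g : ↥G => f₀ ((g⁻¹ : ↥G).1 x₀)) = fun _ : ↥G => f₀ x₀ := by
      funext g; rw [hx₀G _ (g⁻¹ : ↥G).2]
    show (∫ g : ↥G, f₀ ((g⁻¹ : ↥G).1 x₀) ∂μ) = 1
    rw [this, integral_const, measureReal_def, measure_univ, hf₀x₀, hx₀]
    simp
  · intro h hh x
    show flin (h x) = flin x
    have key := integral_mul_left_eq_self (μ := μ)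
      (fun g : ↥G => f₀ ((g⁻¹ : ↥G).1 x)) (⟨h, hh⟩ : ↥G)⁻¹
    calc flin (h x) = ∫ g : ↥G, f₀ ((g⁻¹ : ↥G).1 (h x)) ∂μ := rfl
      _ = ∫ g : ↥G, f₀ ((((⟨h, hh⟩ : ↥G)⁻¹ * g)⁻¹ : ↥G).1 x) ∂μ := by
          congr 1
          funext g
          rw [mul_inv_rev, inv_inv]
          rfl
      _ = ∫ g : ↥G, f₀ ((g⁻¹ : ↥G).1 x) ∂μ := key
      _ = flin x := rfl

/-- Evaluation at a coordinate, as a linear map on `lp`. -/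
def lpEval {𝕜 : Type*} [RCLike 𝕜] {Γ : Type*} (q : ℝ≥0∞) [Fact (1 ≤ q)] (γ : Γ) :
    lp (fun _ : Γ => 𝕜) q →ₗ[𝕜] 𝕜 where
  toFun v := v γ
  map_add' a b := rfl
  map_smul' c a := rfl

@[simp] lemma lpEval_apply {𝕜 : Type*} [RCLike 𝕜] {Γ : Type*} (q : ℝ≥0∞) [Fact (1 ≤ q)]
    (γ : Γ) (v : lp (fun _ : Γ => 𝕜) q) : lpEval q γ v = v γ := rfl


/-- A bounded linear operator attains its norm. -/
def NormAttains {𝕜 : Type*} [RCLike 𝕜] {X Y : Type*} [SeminormedAddCommGroup X]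
    [SeminormedAddCommGroup Y] [NormedSpace 𝕜 X] [NormedSpace 𝕜 Y] (T : X →L[𝕜] Y) : Prop :=
  ∃ x : X, ‖x‖ = 1 ∧ ‖T x‖ = ‖T‖

/-- A set `M` in a vector space is `μ`-lineable if `M ∪ {0}` contains a vector subspace of
dimension `μ`. -/
def Lineable (𝕜 : Type*) {V : Type*} [NormedField 𝕜] [AddCommGroup V] [Module 𝕜 V]
    (M : Set V) (μ : Cardinal) : Prop :=
  ∃ W : Submodule 𝕜 V, Module.rank 𝕜 W = μ ∧ (W : Set V) ⊆ M ∪ {0}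

/-- Let `X` be a Banach space, `G ⊆ L(X)` a compact group of isometries (in
the operator-norm topology), `Γ` an infinite set, `1 ≤ q < ∞`, and `x₀ ∈ X` a `G`-invariant
point of norm one.  Then `NA_G^{x₀}(X, ℓ_q(Γ)) = {T ∈ L_G(X, ℓ_q(Γ)) : ‖T x₀‖ = ‖T‖}` is
`|Γ|`-lineable in `L_G(X, ℓ_q(Γ))`. -/
theorem lineable_normAttainingAt_GInvariant_lq
    {𝕜 : Type u} [RCLike 𝕜]
    {X : Type u} [NormedAddCommGroup X] [NormedSpace 𝕜 X] [CompleteSpace X]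
    (G : Set (X →L[𝕜] X))
    -- `G` consists of isometries:
    (hG_iso : ∀ g ∈ G, ∀ x : X, ‖g x‖ = ‖x‖)
    -- `G` is a group under composition:
    (hG_id : ContinuousLinearMap.id 𝕜 X ∈ G)
    (hG_comp : ∀ g ∈ G, ∀ h ∈ G, g.comp h ∈ G)
    (hG_inv : ∀ g ∈ G, ∃ h ∈ G, g.comp h = ContinuousLinearMap.id 𝕜 X ∧
      h.comp g = ContinuousLinearMap.id 𝕜 X)
    -- `G` is compact in the operator-norm topology:
    (hG_cpt : IsCompact G)
    (Γ : Type u) [Infinite Γ]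
    (q : ℝ≥0∞) [Fact (1 ≤ q)] (hq : q ≠ ⊤)
    (x₀ : X) (hx₀ : ‖x₀‖ = 1) (hx₀G : ∀ g ∈ G, g x₀ = x₀) :
    Lineable 𝕜
      {T : X →L[𝕜] lp (fun _ : Γ => 𝕜) q |
        (∀ g ∈ G, ∀ x : X, T (g x) = T x) ∧ ‖T x₀‖ = ‖T‖}
      (Cardinal.mk Γ) := by
  classical
  obtain ⟨f, hf1, hfx₀, hfinv⟩ :=
    exists_invariant_functional G hG_iso hG_id hG_comp hG_inv hG_cpt x₀ hx₀ hx₀G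
  have hfnorm : ‖f‖ = 1 := by
    refine le_antisymm hf1 ?_
    have h := f.le_opNorm x₀
    rw [hfx₀, hx₀, mul_one] at h
    simpa using h
  set Y := lp (fun _ : Γ => 𝕜) q with hY
  let e : Γ → Y := fun γ => lp.single q γ (1 : 𝕜)
  -- linear independence of the "basis vectors"
  have he : LinearIndependent 𝕜 e := by
    rw [linearIndependent_iff']
    intro s g hs γ hγ
    have h0 : lpEval q γ (∑ i ∈ s, g i • e i) = 0 := by rw [hs]; simp
    rw [map_sum] at h0
    have hterm : ∀ i ∈ s, i ≠ γ → lpEval q γ (g i • e i) = 0 := by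
      intro i _ hiγ
      have h1 : lpEval q γ (e i) = 0 := by
        show (lp.single q i (1 : 𝕜) : lp (fun _ : Γ => 𝕜) q) γ = 0
        exact lp.single_apply_ne (E := fun _ : Γ => 𝕜) q i (1 : 𝕜) (Ne.symm hiγ)
      rw [map_smul, h1, smul_zero]
    rw [Finset.sum_eq_single_of_mem γ hγ (fun i hi hiγ => hterm i hi hiγ)] at h0
    have h1 : lpEval q γ (e γ) = 1 := by
      show (lp.single q γ (1 : 𝕜) : lp (fun _ : Γ => 𝕜) q) γ = (1 : 𝕜)
      exact lp.single_apply_self (E := fun _ : Γ => 𝕜) q γ (1 : 𝕜)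
    rw [map_smul, h1, smul_eq_mul, mul_one] at h0
    exact h0
  let V : Submodule 𝕜 Y := Submodule.span 𝕜 (Set.range e)
  have hVrank : Module.rank 𝕜 V = Cardinal.mk Γ := by
    rw [rank_span he, Cardinal.mk_range_eq e he.injective]
  let L : Y →ₗ[𝕜] (X →L[𝕜] Y) :=
    { toFun := fun v => f.smulRight v
      map_add' := fun v w => by ext x; simp [ContinuousLinearMap.smulRight_apply, smul_add]
      map_smul' := fun c v => by ext x; simp [ContinuousLinearMap.smulRight_apply]; rw [smul_comm] }
  have hLinj : Function.Injective L := by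
    intro v w h
    have h2 : f x₀ • v = f x₀ • w := congrArg (fun T : X →L[𝕜] Y => T x₀) h
    rw [hfx₀, one_smul, one_smul] at h2
    exact h2
  refine ⟨Submodule.map L V, ?_, ?_⟩
  · rw [← (Submodule.equivMapOfInjective L hLinj V).rank_eq, hVrank]
  · intro T hT
    obtain ⟨v, hv, rfl⟩ := Submodule.mem_map.mp hT
    refine Set.mem_union_left _ ⟨fun g hg x => ?_, ?_⟩
    · show f (g x) • v = f x • v
      rw [hfinv g hg x]
    · have h1 : L v x₀ = v := by
        show f x₀ • v = v
        rw [hfx₀, one_smul]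
      have h2 : ‖(L v : X →L[𝕜] Y)‖ = ‖v‖ := by
        show ‖f.smulRight v‖ = ‖v‖
        rw [ContinuousLinearMap.norm_smulRight_apply, hfnorm, one_mul]
      rw [h1, h2]


end
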